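/- Let α > 0 and β > 0, and suppose the feasible set D is nonempty. Then the supremum over p ∈ D of R_{α,β}(p) is attained, and it equals the infimum over V : S → ℝ of β · log Z_V (strong duality). -/

import Mathlib

open Finset

/-- The average total reward `R_{α,β}(p)`, with the convention `0 · log 0 = 0`. -/
noncomputable def Ravg {S A : Type} [Fintype S] [Fintype A]
    (r : S → A → ℝ) (α β : ℝ) (p : S → A → ℝ) : ℝ :=
  (∑ s, ∑ a, p s a * r s a)
    - α * ∑ s, ∑ a, p s a * Real.log (p s a)
    - (β - α) * ∑ s, ∑ a, p s a * Real.log (∑ b, p s b)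

/-- The feasible set `D`. Here `P s a s'` denotes `P(s'|s,a)`. -/
def Dset {S A : Type} [Fintype S] [Fintype A] (P : S → A → S → ℝ) :
    Set (S → A → ℝ) :=
  {p | (∀ s a, 0 ≤ p s a) ∧ (∑ s, ∑ a, p s a) = 1 ∧
    ∀ s' : S, (∑ s, ∑ a, P s a s' * p s a) = ∑ b, p s' b}

/-- The advantage `A_V(s,a) = r(s,a) + Σ_{s'} V(s') P(s'|s,a) − V(s)`. -/
noncomputable def Adv {S A : Type} [Fintype S]
    (P : S → A → S → ℝ) (r : S → A → ℝ) (V : S → ℝ) (s : S) (a : A) : ℝ :=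
  r s a + (∑ s', V s' * P s a s') - V s

/-- The partition function `Z_V = Σ_s (Σ_a exp(A_V(s,a)/α))^{α/β}`. -/
noncomputable def Zfun {S A : Type} [Fintype S] [Fintype A]
    (P : S → A → S → ℝ) (r : S → A → ℝ) (α β : ℝ) (V : S → ℝ) : ℝ :=
  ∑ s, (∑ a, Real.exp (Adv P r V s a / α)) ^ (α / β)

open Real

section aux0

lemma psi_le {x y : ℝ} (c : ℝ) (hx : 0 ≤ x) (hxy : x ≤ y) :
    c * x - x * Real.log (x / y) ≤ y * Real.exp (c - 1) := by
  rcases eq_or_lt_of_le hx with h0 | hx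
  · rw [← h0]
    simp
    exact mul_nonneg (h0 ▸ hxy) (Real.exp_pos _).le
  · have hy : 0 < y := lt_of_lt_of_le hx hxy
    have hxy' : 0 < x / y := div_pos hx hy
    have h := Real.add_one_le_exp (c - 1 - Real.log (x / y))
    have hexp : Real.exp (c - 1 - Real.log (x/y)) = Real.exp (c-1) * (y / x) := by
      rw [Real.exp_sub, Real.exp_log hxy']
      field_simp
    rw [hexp] at h
    have := mul_le_mul_of_nonneg_left h (le_of_lt hx)
    have hx' : x ≠ 0 := ne_of_gt hx
    calc c * x - x * Real.log (x / y) = x * (c - 1 - Real.log (x/y) + 1) := by ring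
      _ ≤ x * (Real.exp (c-1) * (y / x)) := this
      _ = y * Real.exp (c-1) := by field_simp

lemma psi_combo {x1 y1 x2 y2 a b : ℝ} (hx1 : 0 ≤ x1) (h1 : x1 ≤ y1) (hx2 : 0 ≤ x2) (h2 : x2 ≤ y2)
    (ha : 0 ≤ a) (hb : 0 ≤ b) (hab : a + b = 1) :
    (a*x1 + b*x2) * Real.log ((a*x1 + b*x2) / (a*y1 + b*y2))
      ≤ a * (x1 * Real.log (x1 / y1)) + b * (x2 * Real.log (x2 / y2)) := by
  set X := a*x1 + b*x2 with hX
  set Y := a*y1 + b*y2 with hY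
  have hX0 : 0 ≤ X := by positivity
  have hXY : X ≤ Y := by
    apply add_le_add (mul_le_mul_of_nonneg_left h1 ha) (mul_le_mul_of_nonneg_left h2 hb)
  rcases eq_or_lt_of_le hX0 with h0 | hX0
  · have ha1 : a * x1 = 0 := by nlinarith [mul_nonneg ha hx1, mul_nonneg hb hx2]
    have hb2 : b * x2 = 0 := by nlinarith [mul_nonneg ha hx1, mul_nonneg hb hx2]
    rw [← h0]
    simp only [zero_mul]
    rcases mul_eq_zero.1 ha1 with h | h <;> rcases mul_eq_zero.1 hb2 with h' | h' <;>
      simp [h, h']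
  · have hY0 : 0 < Y := lt_of_lt_of_le hX0 hXY
    have hXY' : 0 < X / Y := div_pos hX0 hY0
    set c := Real.log (X / Y) + 1 with hc
    have e1 := psi_le c hx1 h1
    have e2 := psi_le c hx2 h2
    have hec : Real.exp (c - 1) = X / Y := by
      rw [hc]; simp [Real.exp_log hXY']
    rw [hec] at e1 e2
    have key : c * X - (a * (x1 * Real.log (x1 / y1)) + b * (x2 * Real.log (x2 / y2)))
        ≤ Y * (X / Y) := by
      have := add_le_add (mul_le_mul_of_nonneg_left e1 ha) (mul_le_mul_of_nonneg_left e2 hb)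
      calc c * X - (a * (x1 * Real.log (x1 / y1)) + b * (x2 * Real.log (x2 / y2)))
          = a * (c * x1 - x1 * Real.log (x1/y1)) + b * (c * x2 - x2 * Real.log (x2/y2)) := by
            rw [hX]; ring
        _ ≤ a * (y1 * (X/Y)) + b * (y2 * (X/Y)) := this
        _ = Y * (X / Y) := by rw [hY]; ring
    have hYXY : Y * (X / Y) = X := by field_simp
    rw [hYXY] at key
    have hcX : X * Real.log (X / Y) = c * X - X := by rw [hc]; ring
    linarith

lemma gibbs {ι : Type} [Fintype ι] [Nonempty ι] (p x : ι → ℝ) (c mass : ℝ) (hc : 0 < c)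
    (hp : ∀ i, 0 ≤ p i) (hm : ∑ i, p i = mass) :
    (∑ i, p i * x i) - c * ∑ i, p i * Real.log (p i / mass)
      ≤ c * (mass * Real.log (∑ i, Real.exp (x i / c))) := by
  set z := ∑ i, Real.exp (x i / c) with hz
  have hzpos : 0 < z := Finset.sum_pos (fun i _ => Real.exp_pos _) univ_nonempty
  have key : ∀ i, p i * (x i / c) - p i * Real.log (p i / mass)
      ≤ mass * Real.exp (x i / c) / z - p i + p i * Real.log z := by
    intro i
    have hple : p i ≤ mass := by
      rw [← hm]; exact Finset.single_le_sum (fun j _ => hp j) (mem_univ i)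
    have := psi_le (x := p i) (y := mass) (x i / c - Real.log z + 1) (hp i) hple
    have hexp : Real.exp (x i / c - Real.log z + 1 - 1) = Real.exp (x i / c) / z := by
      rw [show x i / c - Real.log z + 1 - 1 = x i / c - Real.log z by ring,
        Real.exp_sub, Real.exp_log hzpos]
    rw [hexp] at this
    have h2 : mass * (Real.exp (x i / c) / z) = mass * Real.exp (x i / c) / z := by ring
    nlinarith [this]
  have hsum : ∑ i, (p i * (x i / c) - p i * Real.log (p i / mass))
      ≤ ∑ i, (mass * Real.exp (x i / c) / z - p i + p i * Real.log z) :=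
    Finset.sum_le_sum (fun i _ => key i)
  have hL : ∑ i, (p i * (x i / c) - p i * Real.log (p i / mass))
      = (∑ i, p i * x i) / c - ∑ i, p i * Real.log (p i / mass) := by
    rw [Finset.sum_sub_distrib, Finset.sum_div]
    congr 1
    exact Finset.sum_congr rfl fun i _ => by ring
  have hR : ∑ i, (mass * Real.exp (x i / c) / z - p i + p i * Real.log z)
      = mass - mass + mass * Real.log z := by
    have h1 : ∑ i, mass * Real.exp (x i / c) / z = mass := by
      rw [← Finset.sum_div, ← Finset.mul_sum, ← hz]
      field_simp
    rw [Finset.sum_add_distrib, Finset.sum_sub_distrib, ← Finset.sum_mul, hm, h1]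
  rw [hL, hR] at hsum
  have : (∑ i, p i * x i) / c - ∑ i, p i * Real.log (p i / mass) ≤ mass * Real.log z := by
    linarith
  calc (∑ i, p i * x i) - c * ∑ i, p i * Real.log (p i / mass)
      = c * ((∑ i, p i * x i) / c - ∑ i, p i * Real.log (p i / mass)) := by
        field_simp
    _ ≤ c * (mass * Real.log z) := by
        exact mul_le_mul_of_nonneg_left this (le_of_lt hc)

end aux0

section aux
variable {S A : Type} [Fintype S] [Fintype A]

lemma combine2 (f g h : S → A → ℝ) (c d : ℝ) :
    (∑ s, ∑ a, f s a) - c * (∑ s, ∑ a, g s a) - d * (∑ s, ∑ a, h s a)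
      = ∑ s, ∑ a, (f s a - c * g s a - d * h s a) := by
  rw [Finset.mul_sum, Finset.mul_sum, ← Finset.sum_sub_distrib, ← Finset.sum_sub_distrib]
  exact Finset.sum_congr rfl fun s _ => by
    rw [Finset.mul_sum, Finset.mul_sum, ← Finset.sum_sub_distrib, ← Finset.sum_sub_distrib]

lemma lag_identity (P : S → A → S → ℝ) (r : S → A → ℝ) (α β : ℝ)
    (p : S → A → ℝ) (V : S → ℝ) :
    Ravg r α β p + ∑ s', V s' * ((∑ s, ∑ a, P s a s' * p s a) - ∑ b, p s' b)
      = (∑ s, ∑ a, p s a * Adv P r V s a)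
        - α * (∑ s, ∑ a, p s a * Real.log (p s a))
        - (β - α) * (∑ s, ∑ a, p s a * Real.log (∑ b, p s b)) := by
  have key : (∑ s, ∑ a, p s a * Adv P r V s a)
      = (∑ s, ∑ a, p s a * r s a)
        + ((∑ s', V s' * ∑ s, ∑ a, P s a s' * p s a) - ∑ s', V s' * ∑ b, p s' b) := by
    have h1 : ∀ s a, p s a * Adv P r V s a
        = p s a * r s a + ((∑ s', V s' * (P s a s' * p s a)) - p s a * V s) := by
      intro s a
      have hmul : p s a * (∑ s', V s' * P s a s') = ∑ s', V s' * (P s a s' * p s a) := by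
        rw [Finset.mul_sum]
        exact Finset.sum_congr rfl fun s' _ => by ring
      simp only [Adv]
      rw [mul_sub, mul_add, hmul]
      ring
    calc ∑ s, ∑ a, p s a * Adv P r V s a
        = ∑ s, ∑ a, (p s a * r s a + ((∑ s', V s' * (P s a s' * p s a)) - p s a * V s)) :=
          Finset.sum_congr rfl fun s _ => Finset.sum_congr rfl fun a _ => h1 s a
      _ = (∑ s, ∑ a, p s a * r s a)
            + ((∑ s, ∑ a, ∑ s', V s' * (P s a s' * p s a)) - ∑ s, ∑ a, p s a * V s) := by
          simp only [Finset.sum_add_distrib, Finset.sum_sub_distrib]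
      _ = (∑ s, ∑ a, p s a * r s a)
            + ((∑ s', V s' * ∑ s, ∑ a, P s a s' * p s a) - ∑ s', V s' * ∑ b, p s' b) := by
          congr 1
          congr 1
          · calc ∑ s, ∑ a, ∑ s', V s' * (P s a s' * p s a)
                = ∑ s, ∑ s', ∑ a, V s' * (P s a s' * p s a) :=
                  Finset.sum_congr rfl fun s _ => Finset.sum_comm
              _ = ∑ s', ∑ s, ∑ a, V s' * (P s a s' * p s a) := Finset.sum_comm
              _ = ∑ s', V s' * ∑ s, ∑ a, P s a s' * p s a := by
                  refine Finset.sum_congr rfl fun s' _ => ?_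
                  rw [Finset.mul_sum]
                  exact Finset.sum_congr rfl fun s _ => (Finset.mul_sum _ _ _).symm
          · refine Finset.sum_congr rfl fun s _ => ?_
            rw [Finset.mul_sum]
            exact Finset.sum_congr rfl fun a _ => by ring
  rw [key, Ravg]
  simp only [mul_sub, Finset.sum_sub_distrib]
  ring

lemma lag_le [Nonempty S] [Nonempty A] (P : S → A → S → ℝ) (r : S → A → ℝ) (α β : ℝ)
    (hα : 0 < α) (hβ : 0 < β) (p : S → A → ℝ) (V : S → ℝ)
    (hp0 : ∀ s a, 0 ≤ p s a) (hp1 : (∑ s, ∑ a, p s a) = 1) :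
    (∑ s, ∑ a, p s a * Adv P r V s a) - α * (∑ s, ∑ a, p s a * Real.log (p s a))
      - (β - α) * (∑ s, ∑ a, p s a * Real.log (∑ b, p s b))
      ≤ β * Real.log (Zfun P r α β V) := by
  have hm0 : ∀ s, (0:ℝ) ≤ ∑ b, p s b := fun s => Finset.sum_nonneg fun b _ => hp0 s b
  have hple : ∀ s a, p s a ≤ ∑ b, p s b := fun s a =>
    Finset.single_le_sum (fun j _ => hp0 s j) (mem_univ a)
  have hzpos : ∀ s, (0:ℝ) < ∑ a, Real.exp (Adv P r V s a / α) :=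
    fun s => Finset.sum_pos (fun a _ => Real.exp_pos _) univ_nonempty
  -- decomposition of entropy
  have eq_a : (∑ s, ∑ a, p s a * Real.log (p s a))
      = (∑ s, ∑ a, p s a * Real.log (p s a / (∑ b, p s b)))
        + ∑ s, ∑ a, p s a * Real.log (∑ b, p s b) := by
    rw [← Finset.sum_add_distrib]
    refine Finset.sum_congr rfl fun s _ => ?_
    rw [← Finset.sum_add_distrib]
    refine Finset.sum_congr rfl fun a _ => ?_
    rcases eq_or_lt_of_le (hp0 s a) with h0 | hpos
    · rw [← h0]; simp
    · have hms : (0:ℝ) < ∑ b, p s b := lt_of_lt_of_le hpos (hple s a)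
      rw [Real.log_div (ne_of_gt hpos) (ne_of_gt hms)]
      ring
  have eq_b : (∑ s, ∑ a, p s a * Real.log (∑ b, p s b))
      = ∑ s, (∑ b, p s b) * Real.log (∑ b, p s b) :=
    Finset.sum_congr rfl fun s _ => by rw [← Finset.sum_mul]
  -- stage A, per state
  have step1 : ∀ s, (∑ a, p s a * Adv P r V s a)
      - α * ∑ a, p s a * Real.log (p s a / (∑ b, p s b))
      ≤ α * ((∑ b, p s b) * Real.log (∑ a, Real.exp (Adv P r V s a / α))) := by
    intro s
    exact gibbs (fun a => p s a) (fun a => Adv P r V s a) α (∑ b, p s b) hα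
      (fun a => hp0 s a) rfl
  have ineq1 : (∑ s, ∑ a, p s a * Adv P r V s a)
      - α * (∑ s, ∑ a, p s a * Real.log (p s a / (∑ b, p s b)))
      ≤ ∑ s, (∑ b, p s b) * (α * Real.log (∑ a, Real.exp (Adv P r V s a / α))) := by
    rw [Finset.mul_sum, ← Finset.sum_sub_distrib]
    refine le_trans (Finset.sum_le_sum fun s _ => step1 s) (le_of_eq ?_)
    exact Finset.sum_congr rfl fun s _ => by ring
  -- stage B
  have step2 : (∑ s, (∑ b, p s b) * (α * Real.log (∑ a, Real.exp (Adv P r V s a / α))))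
      - β * ∑ s, (∑ b, p s b) * Real.log ((∑ b, p s b) / 1)
      ≤ β * (1 * Real.log (∑ s, Real.exp (α * Real.log (∑ a, Real.exp (Adv P r V s a / α)) / β))) := by
    exact gibbs (fun s => ∑ b, p s b) (fun s => α * Real.log (∑ a, Real.exp (Adv P r V s a / α)))
      β 1 hβ hm0 hp1
  have hZ : (∑ s, Real.exp (α * Real.log (∑ a, Real.exp (Adv P r V s a / α)) / β))
      = Zfun P r α β V := by
    refine Finset.sum_congr rfl fun s _ => ?_
    rw [Real.rpow_def_of_pos (hzpos s)]
    congr 1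
    ring
  rw [hZ] at step2
  simp only [div_one, one_mul] at step2
  rw [eq_a, eq_b]
  have hre : (∑ s, ∑ a, p s a * Adv P r V s a)
      - α * ((∑ s, ∑ a, p s a * Real.log (p s a / (∑ b, p s b)))
          + ∑ s, (∑ b, p s b) * Real.log (∑ b, p s b))
      - (β - α) * ∑ s, (∑ b, p s b) * Real.log (∑ b, p s b)
      = ((∑ s, ∑ a, p s a * Adv P r V s a)
          - α * (∑ s, ∑ a, p s a * Real.log (p s a / (∑ b, p s b))))
        - β * ∑ s, (∑ b, p s b) * Real.log (∑ b, p s b) := by ring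
  rw [hre]
  linarith [ineq1, step2]

lemma softmax_eq [Nonempty S] [Nonempty A] (P : S → A → S → ℝ) (r : S → A → ℝ) (α β : ℝ)
    (hα : 0 < α) (hβ : 0 < β) (V : S → ℝ) :
    ∃ q : S → A → ℝ, (∀ s a, 0 ≤ q s a) ∧ ((∑ s, ∑ a, q s a) = 1) ∧
      (∑ s, ∑ a, q s a * Adv P r V s a) - α * (∑ s, ∑ a, q s a * Real.log (q s a))
        - (β - α) * (∑ s, ∑ a, q s a * Real.log (∑ b, q s b))
        = β * Real.log (Zfun P r α β V) := by
  have hzpos : ∀ s, (0:ℝ) < ∑ a, Real.exp (Adv P r V s a / α) :=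
    fun s => Finset.sum_pos (fun a _ => Real.exp_pos _) univ_nonempty
  have hZeq : Zfun P r α β V = ∑ s, (∑ a, Real.exp (Adv P r V s a / α)) ^ (α/β) := rfl
  have hZpos : 0 < Zfun P r α β V := by
    rw [hZeq]
    exact Finset.sum_pos (fun s _ => Real.rpow_pos_of_pos (hzpos s) _) univ_nonempty
  set Z := Zfun P r α β V with hZdef
  set q : S → A → ℝ := fun s a =>
    Real.exp (Adv P r V s a / α) * ((∑ a, Real.exp (Adv P r V s a / α)) ^ (α/β - 1)) / Z
    with hqdef
  have hqpos : ∀ s a, 0 < q s a := fun s a => by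
    simp only [hqdef]
    exact div_pos (mul_pos (Real.exp_pos _) (Real.rpow_pos_of_pos (hzpos s) _)) hZpos
  have hrow : ∀ s, (∑ b, q s b) = (∑ a, Real.exp (Adv P r V s a / α)) ^ (α/β) / Z := by
    intro s
    simp only [hqdef]
    rw [← Finset.sum_div, ← Finset.sum_mul]
    congr 1
    rw [Real.rpow_sub_one (ne_of_gt (hzpos s))]
    field_simp
  have htot : (∑ s, ∑ a, q s a) = 1 := by
    have : (∑ s, ∑ a, q s a) = ∑ s, (∑ a, Real.exp (Adv P r V s a / α)) ^ (α/β) / Z :=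
      Finset.sum_congr rfl fun s _ => hrow s
    have hsum : (0:ℝ) < ∑ s, (∑ a, Real.exp (Adv P r V s a / α)) ^ (α/β) := hZeq ▸ hZpos
    rw [this, ← Finset.sum_div, hZeq]
    exact div_self hsum.ne'
  refine ⟨q, fun s a => (hqpos s a).le, htot, ?_⟩
  have hlogq : ∀ s a, Real.log (q s a)
      = Adv P r V s a / α + (α/β - 1) * Real.log (∑ a, Real.exp (Adv P r V s a / α))
        - Real.log Z := by
    intro s a
    simp only [hqdef]
    rw [Real.log_div (ne_of_gt (mul_pos (Real.exp_pos _) (Real.rpow_pos_of_pos (hzpos s) _)))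
      (ne_of_gt hZpos),
      Real.log_mul (ne_of_gt (Real.exp_pos _)) (ne_of_gt (Real.rpow_pos_of_pos (hzpos s) _)),
      Real.log_exp, Real.log_rpow (hzpos s)]
  have hlogm : ∀ s, Real.log (∑ b, q s b)
      = (α/β) * Real.log (∑ a, Real.exp (Adv P r V s a / α)) - Real.log Z := by
    intro s
    rw [hrow s, Real.log_div (ne_of_gt (Real.rpow_pos_of_pos (hzpos s) _)) (ne_of_gt hZpos),
      Real.log_rpow (hzpos s)]
  have hterm : ∀ s a, q s a * Adv P r V s a - α * (q s a * Real.log (q s a))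
      - (β - α) * (q s a * Real.log (∑ b, q s b)) = q s a * (β * Real.log Z) := by
    intro s a
    rw [hlogq s a, hlogm s]
    field_simp
    ring
  rw [combine2]
  calc (∑ s, ∑ a, (q s a * Adv P r V s a - α * (q s a * Real.log (q s a))
          - (β - α) * (q s a * Real.log (∑ b, q s b))))
      = ∑ s, ∑ a, q s a * (β * Real.log Z) :=
        Finset.sum_congr rfl fun s _ => Finset.sum_congr rfl fun a _ => hterm s a
    _ = β * Real.log Z := by
        have hmul : (∑ s, ∑ a, q s a * (β * Real.log Z))
            = (∑ s, ∑ a, q s a) * (β * Real.log Z) := by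
          rw [Finset.sum_mul]
          exact Finset.sum_congr rfl fun s _ => (Finset.sum_mul _ _ _).symm
        rw [hmul, htot, one_mul]
end aux
section aux2
open Finset Real
variable {S A : Type} [Fintype S] [Fintype A]

lemma Ravg_eq (r : S → A → ℝ) (α β : ℝ) (p : S → A → ℝ) :
    Ravg r α β p = (∑ s, ∑ a, p s a * r s a)
      - α * (∑ s, ∑ a, p s a * Real.log (p s a))
      - (β - α) * ∑ s, (∑ b, p s b) * Real.log (∑ b, p s b) := by
  have h3 : (∑ s, ∑ a, p s a * Real.log (∑ b, p s b))
      = ∑ s, (∑ b, p s b) * Real.log (∑ b, p s b) :=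
    Finset.sum_congr rfl fun s _ => by rw [← Finset.sum_mul]
  rw [Ravg, h3]

lemma continuous_Ravg (r : S → A → ℝ) (α β : ℝ) :
    Continuous fun p : S → A → ℝ => Ravg r α β p := by
  have happ : ∀ (s : S) (a : A), Continuous fun p : S → A → ℝ => p s a :=
    fun s a => (continuous_apply a).comp (continuous_apply s)
  have hsumrow : ∀ s : S, Continuous fun p : S → A → ℝ => ∑ b, p s b :=
    fun s => continuous_finset_sum _ fun b _ => happ s b
  have heq : (fun p : S → A → ℝ => Ravg r α β p) = fun p =>
      (∑ s, ∑ a, p s a * r s a) - α * (∑ s, ∑ a, p s a * Real.log (p s a))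
        - (β - α) * ∑ s, (∑ b, p s b) * Real.log (∑ b, p s b) :=
    funext fun p => Ravg_eq r α β p
  rw [heq]
  refine Continuous.sub (Continuous.sub ?_ ?_) ?_
  · exact continuous_finset_sum _ fun s _ => continuous_finset_sum _ fun a _ =>
      (happ s a).mul continuous_const
  · exact continuous_const.mul (continuous_finset_sum _ fun s _ =>
      continuous_finset_sum _ fun a _ => Real.continuous_mul_log.comp (happ s a))
  · exact continuous_const.mul (continuous_finset_sum _ fun s _ =>
      Real.continuous_mul_log.comp (hsumrow s))

lemma isClosed_simplex :
    IsClosed {p : S → A → ℝ | (∀ s a, 0 ≤ p s a) ∧ (∑ s, ∑ a, p s a) = 1} := by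
  have happ : ∀ (s : S) (a : A), Continuous fun p : S → A → ℝ => p s a :=
    fun s a => (continuous_apply a).comp (continuous_apply s)
  have hset : {p : S → A → ℝ | (∀ s a, 0 ≤ p s a) ∧ (∑ s, ∑ a, p s a) = 1}
      = (⋂ s, ⋂ a, {p : S → A → ℝ | 0 ≤ p s a}) ∩ {p : S → A → ℝ | (∑ s, ∑ a, p s a) = 1} := by
    ext p
    simp [Set.mem_iInter]
  rw [hset]
  refine IsClosed.inter (isClosed_iInter fun s => isClosed_iInter fun a =>
    isClosed_le continuous_const (happ s a)) (isClosed_eq ?_ continuous_const)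
  exact continuous_finset_sum _ fun s _ => continuous_finset_sum _ fun a _ => happ s a

lemma isCompact_simplex :
    IsCompact {p : S → A → ℝ | (∀ s a, 0 ≤ p s a) ∧ (∑ s, ∑ a, p s a) = 1} := by
  refine IsCompact.of_isClosed_subset
    (isCompact_univ_pi fun _ : S => isCompact_univ_pi fun _ : A => isCompact_Icc (a := (0:ℝ)) (b := 1))
    isClosed_simplex ?_
  rintro p ⟨hp0, hp1⟩
  rw [Set.mem_univ_pi]
  intro s
  rw [Set.mem_univ_pi]
  intro a
  refine ⟨hp0 s a, ?_⟩
  calc p s a ≤ ∑ b, p s b := Finset.single_le_sum (fun b _ => hp0 s b) (mem_univ a)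
    _ ≤ ∑ s', ∑ b, p s' b :=
        Finset.single_le_sum (f := fun s' => ∑ b, p s' b)
          (fun s' _ => Finset.sum_nonneg fun b _ => hp0 s' b) (mem_univ s)
    _ = 1 := hp1

lemma isClosed_Dset (P : S → A → S → ℝ) : IsClosed (Dset P (S := S) (A := A)) := by
  have happ : ∀ (s : S) (a : A), Continuous fun p : S → A → ℝ => p s a :=
    fun s a => (continuous_apply a).comp (continuous_apply s)
  have hset : Dset P (S := S) (A := A)
      = ({p : S → A → ℝ | (∀ s a, 0 ≤ p s a) ∧ (∑ s, ∑ a, p s a) = 1}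
        ∩ ⋂ s' : S, {p : S → A → ℝ | (∑ s, ∑ a, P s a s' * p s a) = ∑ b, p s' b}) := by
    ext p
    simp only [Dset, Set.mem_setOf_eq, Set.mem_inter_iff, Set.mem_iInter]
    tauto
  rw [hset]
  refine IsClosed.inter isClosed_simplex (isClosed_iInter fun s' => isClosed_eq ?_ ?_)
  · exact continuous_finset_sum _ fun s _ => continuous_finset_sum _ fun a _ =>
      continuous_const.mul (happ s a)
  · exact continuous_finset_sum _ fun b _ => happ s' b

lemma entropy_split (p : S → A → ℝ) (hp0 : ∀ s a, 0 ≤ p s a) :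
    (∑ s, ∑ a, p s a * Real.log (p s a))
      = (∑ s, ∑ a, p s a * Real.log (p s a / (∑ b, p s b)))
        + ∑ s, (∑ b, p s b) * Real.log (∑ b, p s b) := by
  have hple : ∀ s a, p s a ≤ ∑ b, p s b := fun s a =>
    Finset.single_le_sum (fun j _ => hp0 s j) (mem_univ a)
  have eq_b : ∀ s : S, (∑ b, p s b) * Real.log (∑ b, p s b)
      = ∑ a, p s a * Real.log (∑ b, p s b) := fun s => by rw [← Finset.sum_mul]
  rw [← Finset.sum_add_distrib]
  refine Finset.sum_congr rfl fun s _ => ?_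
  rw [eq_b s, ← Finset.sum_add_distrib]
  refine Finset.sum_congr rfl fun a _ => ?_
  rcases eq_or_lt_of_le (hp0 s a) with h0 | hpos
  · rw [← h0]; simp
  · have hms : (0:ℝ) < ∑ b, p s b := lt_of_lt_of_le hpos (hple s a)
    rw [Real.log_div (ne_of_gt hpos) (ne_of_gt hms)]
    ring

lemma Ravg_rep (r : S → A → ℝ) (α β : ℝ) (p : S → A → ℝ) (hp0 : ∀ s a, 0 ≤ p s a) :
    Ravg r α β p = (∑ s, ∑ a, p s a * r s a)
      - α * (∑ s, ∑ a, p s a * Real.log (p s a / (∑ b, p s b)))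
      - β * ∑ s, (∑ b, p s b) * Real.log (∑ b, p s b) := by
  rw [Ravg_eq, entropy_split p hp0]
  ring

lemma Ravg_concave (r : S → A → ℝ) (α β : ℝ) (hα : 0 < α) (hβ : 0 < β)
    (p q : S → A → ℝ) (hp0 : ∀ s a, 0 ≤ p s a) (hq0 : ∀ s a, 0 ≤ q s a)
    (hp1 : (∑ s, ∑ a, p s a) = 1) (hq1 : (∑ s, ∑ a, q s a) = 1)
    (a b : ℝ) (ha : 0 ≤ a) (hb : 0 ≤ b) (hab : a + b = 1) :
    a * Ravg r α β p + b * Ravg r α β q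
      ≤ Ravg r α β (fun s x => a * p s x + b * q s x) := by
  have hc0 : ∀ s x, 0 ≤ a * p s x + b * q s x := fun s x => by
    have := hp0 s x; have := hq0 s x; positivity
  have hrowc : ∀ s, (∑ x, (a * p s x + b * q s x)) = a * (∑ x, p s x) + b * (∑ x, q s x) := by
    intro s
    rw [Finset.sum_add_distrib, ← Finset.mul_sum, ← Finset.mul_sum]
  have hple : ∀ s x, p s x ≤ ∑ y, p s y := fun s x =>
    Finset.single_le_sum (fun j _ => hp0 s j) (mem_univ x)
  have hqle : ∀ s x, q s x ≤ ∑ y, q s y := fun s x =>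
    Finset.single_le_sum (fun j _ => hq0 s j) (mem_univ x)
  have hprow1 : ∀ s, (∑ y, p s y) ≤ 1 := fun s => hp1 ▸
    Finset.single_le_sum (f := fun s' => ∑ y, p s' y)
      (fun s' _ => Finset.sum_nonneg fun y _ => hp0 s' y) (mem_univ s)
  have hqrow1 : ∀ s, (∑ y, q s y) ≤ 1 := fun s => hq1 ▸
    Finset.single_le_sum (f := fun s' => ∑ y, q s' y)
      (fun s' _ => Finset.sum_nonneg fun y _ => hq0 s' y) (mem_univ s)
  -- linear part
  have hlin : (∑ s, ∑ x, (a * p s x + b * q s x) * r s x)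
      = a * (∑ s, ∑ x, p s x * r s x) + b * (∑ s, ∑ x, q s x * r s x) := by
    rw [Finset.mul_sum, Finset.mul_sum, ← Finset.sum_add_distrib]
    refine Finset.sum_congr rfl fun s _ => ?_
    rw [Finset.mul_sum, Finset.mul_sum, ← Finset.sum_add_distrib]
    exact Finset.sum_congr rfl fun x _ => by ring
  -- conditional entropy part
  have hpsi : (∑ s, ∑ x, (a * p s x + b * q s x)
        * Real.log ((a * p s x + b * q s x) / (∑ y, (a * p s y + b * q s y))))
      ≤ a * (∑ s, ∑ x, p s x * Real.log (p s x / (∑ y, p s y)))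
        + b * (∑ s, ∑ x, q s x * Real.log (q s x / (∑ y, q s y))) := by
    rw [Finset.mul_sum, Finset.mul_sum, ← Finset.sum_add_distrib]
    refine Finset.sum_le_sum fun s _ => ?_
    rw [Finset.mul_sum, Finset.mul_sum, ← Finset.sum_add_distrib]
    refine Finset.sum_le_sum fun x _ => ?_
    have := psi_combo (hp0 s x) (hple s x) (hq0 s x) (hqle s x) ha hb hab
    rw [hrowc s]
    exact this
  -- marginal entropy part
  have hmar : (∑ s, (∑ y, (a * p s y + b * q s y)) * Real.log (∑ y, (a * p s y + b * q s y)))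
      ≤ a * (∑ s, (∑ y, p s y) * Real.log (∑ y, p s y))
        + b * (∑ s, (∑ y, q s y) * Real.log (∑ y, q s y)) := by
    rw [Finset.mul_sum, Finset.mul_sum, ← Finset.sum_add_distrib]
    refine Finset.sum_le_sum fun s _ => ?_
    have h1 : (0:ℝ) ≤ ∑ y, p s y := Finset.sum_nonneg fun y _ => hp0 s y
    have h2 : (0:ℝ) ≤ ∑ y, q s y := Finset.sum_nonneg fun y _ => hq0 s y
    have := psi_combo h1 (hprow1 s) h2 (hqrow1 s) ha hb hab
    rw [hrowc s]
    have hone : a * 1 + b * 1 = 1 := by rw [mul_one, mul_one, hab]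
    rw [hone] at this
    simpa [div_one] using this
  rw [Ravg_rep r α β p hp0, Ravg_rep r α β q hq0, Ravg_rep r α β _ hc0]
  have e1 := mul_le_mul_of_nonneg_left hpsi hα.le
  have e2 := mul_le_mul_of_nonneg_left hmar hβ.le
  rw [hlin]
  nlinarith [e1, e2]

end aux2

/-- strong duality: for `α > 0`, `β > 0` and `D` nonempty, the
supremum of `R_{α,β}` over `D` is attained and equals `⨅ V, β log Z_V`. -/
theorem strong_duality {S A : Type} [Fintype S] [Fintype A]
    [Nonempty S] [Nonempty A]
    (P : S → A → S → ℝ) (hP0 : ∀ s a s', 0 ≤ P s a s')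
    (hP1 : ∀ s a, (∑ s', P s a s') = 1)
    (r : S → A → ℝ) (α β : ℝ) (hα : 0 < α) (hβ : 0 < β)
    (hD : (Dset P (S := S) (A := A)).Nonempty) :
    ∃ p ∈ Dset P, (∀ q ∈ Dset P, Ravg r α β q ≤ Ravg r α β p) ∧
      Ravg r α β p = ⨅ V : S → ℝ, β * Real.log (Zfun P r α β V) := by
  classical
  obtain ⟨pstar, hpstarD, hmax⟩ :=
    (IsCompact.of_isClosed_subset isCompact_simplex (isClosed_Dset P)
        (fun p hp => ⟨hp.1, hp.2.1⟩)).exists_isMaxOn hD (continuous_Ravg r α β).continuousOn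
  refine ⟨pstar, hpstarD, fun q hq => hmax hq, ?_⟩
  set M := Ravg r α β pstar with hMdef
  have weak : ∀ p ∈ Dset P (S := S) (A := A), ∀ V : S → ℝ,
      Ravg r α β p ≤ β * Real.log (Zfun P r α β V) := by
    intro p hp V
    have h0 : (∑ s', V s' * ((∑ s, ∑ a, P s a s' * p s a) - ∑ b, p s' b)) = 0 :=
      Finset.sum_eq_zero fun s' _ => by rw [hp.2.2 s']; ring
    have hid := lag_identity P r α β p V
    rw [h0, add_zero] at hid
    rw [hid]
    exact lag_le P r α β hα hβ p V hp.1 hp.2.1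
  have hbdd : BddBelow (Set.range fun V : S → ℝ => β * Real.log (Zfun P r α β V)) := by
    refine ⟨M, ?_⟩
    rintro x ⟨V, rfl⟩
    exact weak pstar hpstarD V
  have hle : M ≤ ⨅ V : S → ℝ, β * Real.log (Zfun P r α β V) :=
    le_ciInf fun V => weak pstar hpstarD V
  have hstrong : ∀ m : ℝ, M < m → ∃ V : S → ℝ, β * Real.log (Zfun P r α β V) < m := by
    intro m hm
    set C : Set ((S → ℝ) × ℝ) :=
      {yt | ∃ p : S → A → ℝ, (∀ s a, 0 ≤ p s a) ∧ ((∑ s, ∑ a, p s a) = 1) ∧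
        (∀ s', yt.1 s' = (∑ s, ∑ a, P s a s' * p s a) - ∑ b, p s' b) ∧
        yt.2 ≤ Ravg r α β p} with hCdef
    have hconv : Convex ℝ C := by
      rintro ⟨y1, t1⟩ hx ⟨y2, t2⟩ hy a b ha hb hab
      rw [hCdef] at hx hy ⊢
      obtain ⟨p1, hp10, hp11, hy1, ht1⟩ := hx
      obtain ⟨p2, hp20, hp21, hy2, ht2⟩ := hy
      refine ⟨fun s x => a * p1 s x + b * p2 s x,
        fun s x => by have := hp10 s x; have := hp20 s x; positivity, ?_, ?_, ?_⟩
      · have htot : (∑ s, ∑ x, (a * p1 s x + b * p2 s x))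
            = a * (∑ s, ∑ x, p1 s x) + b * (∑ s, ∑ x, p2 s x) := by
          rw [Finset.mul_sum, Finset.mul_sum, ← Finset.sum_add_distrib]
          refine Finset.sum_congr rfl fun s _ => ?_
          rw [Finset.mul_sum, Finset.mul_sum, ← Finset.sum_add_distrib]
        rw [htot, hp11, hp21, mul_one, mul_one, hab]
      · intro s'
        have hy1' : y1 s' = (∑ s, ∑ a, P s a s' * p1 s a) - ∑ b, p1 s' b := hy1 s'
        have hy2' : y2 s' = (∑ s, ∑ a, P s a s' * p2 s a) - ∑ b, p2 s' b := hy2 s'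
        show a * y1 s' + b * y2 s'
            = (∑ s, ∑ x, P s x s' * (a * p1 s x + b * p2 s x)) - ∑ x, (a * p1 s' x + b * p2 s' x)
        rw [hy1', hy2']
        have hPsum : (∑ s, ∑ x, P s x s' * (a * p1 s x + b * p2 s x))
            = a * (∑ s, ∑ x, P s x s' * p1 s x) + b * (∑ s, ∑ x, P s x s' * p2 s x) := by
          rw [Finset.mul_sum, Finset.mul_sum, ← Finset.sum_add_distrib]
          refine Finset.sum_congr rfl fun s _ => ?_
          rw [Finset.mul_sum, Finset.mul_sum, ← Finset.sum_add_distrib]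
          exact Finset.sum_congr rfl fun x _ => by ring
        have hrow : (∑ x, (a * p1 s' x + b * p2 s' x))
            = a * (∑ x, p1 s' x) + b * (∑ x, p2 s' x) := by
          rw [Finset.sum_add_distrib, ← Finset.mul_sum, ← Finset.mul_sum]
        rw [hPsum, hrow]
        ring
      · have hsnd : (a • ((y1, t1) : (S → ℝ) × ℝ) + b • ((y2, t2) : (S → ℝ) × ℝ)).2
            = a * t1 + b * t2 := rfl
        rw [hsnd]
        calc a * t1 + b * t2 ≤ a * Ravg r α β p1 + b * Ravg r α β p2 :=
              add_le_add (mul_le_mul_of_nonneg_left ht1 ha) (mul_le_mul_of_nonneg_left ht2 hb)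
          _ ≤ _ := Ravg_concave r α β hα hβ p1 p2 hp10 hp20 hp11 hp21 a b ha hb hab
    have hclosed : IsClosed C := by
      refine IsSeqClosed.isClosed ?_
      intro x yt hmem hlim
      have hmem' : ∀ n, ∃ p : S → A → ℝ, (∀ s a, 0 ≤ p s a) ∧ ((∑ s, ∑ a, p s a) = 1) ∧
          (∀ s', (x n).1 s' = (∑ s, ∑ a, P s a s' * p s a) - ∑ b, p s' b) ∧
          (x n).2 ≤ Ravg r α β p := fun n => hmem n
      choose ps h0 h1 h2 h3 using hmem'
      obtain ⟨p, hpmem, φ, hφ, hplim⟩ := isCompact_simplex.tendsto_subseq (fun n => ⟨h0 n, h1 n⟩)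
      have hsub : Filter.Tendsto (fun n => x (φ n)) Filter.atTop (nhds yt) :=
        hlim.comp hφ.tendsto_atTop
      rw [hCdef]
      refine ⟨p, hpmem.1, hpmem.2, ?_, ?_⟩
      · intro s'
        have hcont : Continuous fun p : S → A → ℝ =>
            (∑ s, ∑ a, P s a s' * p s a) - ∑ b, p s' b := by
          refine Continuous.sub ?_ ?_
          · exact continuous_finset_sum _ fun s _ => continuous_finset_sum _ fun a _ =>
              continuous_const.mul ((continuous_apply a).comp (continuous_apply s))
          · exact continuous_finset_sum _ fun b _ => (continuous_apply b).comp (continuous_apply s')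
        have t1 : Filter.Tendsto (fun n => (x (φ n)).1 s') Filter.atTop (nhds (yt.1 s')) :=
          ((continuous_apply s').tendsto _).comp ((continuous_fst.tendsto _).comp hsub)
        have t2 : Filter.Tendsto (fun n => (x (φ n)).1 s') Filter.atTop
            (nhds ((∑ s, ∑ a, P s a s' * p s a) - ∑ b, p s' b)) := by
          refine ((hcont.tendsto p).comp hplim).congr fun n => ?_
          exact (h2 (φ n) s').symm
        exact tendsto_nhds_unique t1 t2
      · have t1 : Filter.Tendsto (fun n => (x (φ n)).2) Filter.atTop (nhds yt.2) :=
          (continuous_snd.tendsto _).comp hsub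
        have t2 : Filter.Tendsto (fun n => Ravg r α β (ps (φ n))) Filter.atTop
            (nhds (Ravg r α β p)) := ((continuous_Ravg r α β).tendsto p).comp hplim
        exact le_of_tendsto_of_tendsto' t1 t2 fun n => h3 (φ n)
    have hnotmem : (((0 : S → ℝ), m) : (S → ℝ) × ℝ) ∉ C := by
      intro hmemC
      rw [hCdef] at hmemC
      obtain ⟨p, hp0, hp1, hyeq, htle⟩ := hmemC
      have hpD : p ∈ Dset P (S := S) (A := A) := by
        refine ⟨hp0, hp1, fun s' => ?_⟩
        have h := hyeq s'
        simp only [Pi.zero_apply] at h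
        linarith
      exact absurd (le_trans htle (hmax hpD)) (not_le.2 hm)
    obtain ⟨f, u, hfC, hfx⟩ := geometric_hahn_banach_closed_point hconv hclosed hnotmem
    have hf_eq : ∀ (y : S → ℝ) (t : ℝ),
        f (y, t) = (∑ s, y s * f (Pi.single s 1, 0)) + t * f ((0 : S → ℝ), 1) := by
      intro y t
      have h1 : ((y, t) : (S → ℝ) × ℝ) = (y, (0:ℝ)) + ((0 : S → ℝ), t) := by
        ext <;> simp
      have h2 : (((0 : S → ℝ), t) : (S → ℝ) × ℝ) = t • (((0 : S → ℝ), (1:ℝ))) := by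
        ext <;> simp
      have hyrep : y = ∑ s, (y s) • (Pi.single s 1 : S → ℝ) := by
        have h := Finset.univ_sum_single y
        rw [← h]
        refine Finset.sum_congr rfl fun s _ => ?_
        ext x
        by_cases hx : s = x
        · subst hx; simp
        · simp [Pi.single_apply, hx]
      have h3 : ((y, (0:ℝ)) : (S → ℝ) × ℝ)
          = ∑ s, (y s) • (((Pi.single s 1 : S → ℝ), (0:ℝ)) : (S → ℝ) × ℝ) := by
        calc ((y, (0:ℝ)) : (S → ℝ) × ℝ)
            = (∑ s, (y s) • (Pi.single s 1 : S → ℝ), ∑ _s : S, (0:ℝ)) := by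
              rw [← hyrep]
              simp
          _ = ∑ s, (((y s) • (Pi.single s 1 : S → ℝ), (0:ℝ)) : (S → ℝ) × ℝ) :=
              prod_mk_sum _ _ _
          _ = ∑ s, (y s) • (((Pi.single s 1 : S → ℝ), (0:ℝ)) : (S → ℝ) × ℝ) := by
              refine Finset.sum_congr rfl fun s _ => ?_
              rw [Prod.smul_mk, smul_zero]
      have hy0 : f (y, (0:ℝ)) = ∑ s, y s * f (Pi.single s 1, 0) := by
        rw [h3, map_sum]
        exact Finset.sum_congr rfl fun s _ => by rw [map_smul, smul_eq_mul]
      have ht0 : f ((0 : S → ℝ), t) = t * f ((0 : S → ℝ), 1) := by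
        rw [h2, map_smul, smul_eq_mul]
      rw [h1, map_add, hy0, ht0]
    have hmemD : ∀ t : ℝ, t ≤ M → (((0 : S → ℝ), t) : (S → ℝ) × ℝ) ∈ C := by
      intro t ht
      rw [hCdef]
      refine ⟨pstar, hpstarD.1, hpstarD.2.1, fun s' => ?_, ht⟩
      simp only [Pi.zero_apply]
      rw [hpstarD.2.2 s']
      ring
    have hzero : ∀ t : ℝ, f ((0 : S → ℝ), t) = t * f ((0 : S → ℝ), 1) := by
      intro t
      rw [hf_eq]
      simp
    have hfx' : u < m * f ((0 : S → ℝ), 1) := by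
      have h := hfx
      rw [hzero m] at h
      exact h
    have hMc : M * f ((0 : S → ℝ), 1) < u := by
      have h := hfC _ (hmemD M le_rfl)
      rw [hzero M] at h
      exact h
    have hc0 : 0 ≤ f ((0 : S → ℝ), 1) := by
      by_contra hneg
      push_neg at hneg
      set c := f ((0 : S → ℝ), 1) with hc
      have hdm : (u / c) * c = u := div_mul_cancel₀ u (ne_of_lt hneg)
      have ht2 : min M (u / c - 1) ≤ u / c - 1 := min_le_right _ _
      have hmember := hfC _ (hmemD (min M (u / c - 1)) (min_le_left _ _))
      rw [hzero] at hmember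
      nlinarith [hmember, ht2, hneg, hdm]
    have hcpos : 0 < f ((0 : S → ℝ), 1) := by
      rcases eq_or_lt_of_le hc0 with h | h
      · rw [← h] at hfx' hMc
        simp at hfx' hMc
        linarith
      · exact h
    set V : S → ℝ := fun s => f (Pi.single s 1, 0) / f ((0 : S → ℝ), 1) with hVdef
    obtain ⟨q, hq0, hq1, hqval⟩ := softmax_eq P r α β hα hβ V
    have hqC : (((fun s' => (∑ s, ∑ a, P s a s' * q s a) - ∑ b, q s' b), Ravg r α β q)
        : (S → ℝ) × ℝ) ∈ C := by
      rw [hCdef]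
      exact ⟨q, hq0, hq1, fun s' => rfl, le_rfl⟩
    have hflt := hfC _ hqC
    rw [hf_eq] at hflt
    beta_reduce at hflt
    have hval : Ravg r α β q
        + ∑ s', V s' * ((∑ s, ∑ a, P s a s' * q s a) - ∑ b, q s' b)
        = β * Real.log (Zfun P r α β V) := by
      rw [lag_identity P r α β q V]
      exact hqval
    refine ⟨V, ?_⟩
    rw [← hval]
    have hVsum : (∑ s', V s' * ((∑ s, ∑ a, P s a s' * q s a) - ∑ b, q s' b))
        = (∑ s', ((∑ s, ∑ a, P s a s' * q s a) - ∑ b, q s' b) * f (Pi.single s' 1, 0))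
          / f ((0 : S → ℝ), 1) := by
      rw [Finset.sum_div]
      refine Finset.sum_congr rfl fun s' _ => ?_
      rw [hVdef]
      ring
    rw [hVsum]
    rw [← mul_lt_mul_iff_of_pos_right hcpos]
    have hexp : (Ravg r α β q
        + (∑ s', ((∑ s, ∑ a, P s a s' * q s a) - ∑ b, q s' b) * f (Pi.single s' 1, 0))
          / f ((0 : S → ℝ), 1)) * f ((0 : S → ℝ), 1)
        = (∑ s', ((∑ s, ∑ a, P s a s' * q s a) - ∑ b, q s' b) * f (Pi.single s' 1, 0))
          + Ravg r α β q * f ((0 : S → ℝ), 1) := by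
      field_simp
      ring
    rw [hexp]
    linarith [hflt, hfx']
  have hinf_le : (⨅ V : S → ℝ, β * Real.log (Zfun P r α β V)) ≤ M := by
    by_contra hcon
    push_neg at hcon
    obtain ⟨V, hV⟩ := hstrong _ hcon
    exact lt_irrefl _ (lt_of_le_of_lt (ciInf_le hbdd V) hV)
  exact le_antisymm hle hinf_le
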